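/- arXiv:2202.09058 — 9 statements merged into one kernel-verified Lean document; each statement's English description precedes it below -/
import Mathlib

section
/- For any continuously differentiable f: R^{n×p} → R and any X ∈ R^{n×p}, the matrices ψ(X)X and X(XᵀX − I_p) are orthogonal with respect to the Frobenius inner product, i.e., tr((ψ(X)X)ᵀ X(XᵀX − I_p)) = 0, where ψ(X) = ∇f(X)Xᵀ − X∇f(X)ᵀ. -/
open Matrix

attribute [local instance] Matrix.frobeniusNormedAddCommGroup Matrix.frobeniusNormedSpace

lemma trace_skew_symm {p : ℕ} (M S : Matrix (Fin p) (Fin p) ℝ)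
    (hM : Mᵀ = -M) (hS : Sᵀ = S) : (M * S).trace = 0 := by
  have h : (M * S).trace = -(M * S).trace := by
    conv_lhs => rw [← Matrix.trace_transpose, Matrix.transpose_mul, hM, hS,
      Matrix.mul_neg, Matrix.trace_neg, Matrix.trace_mul_comm]
  linarith

/-- For a continuously differentiable `f` with Euclidean gradient `G = ∇f(X)` at `X`
(characterized via the Frobenius inner product), the matrices `ψ(X)X` and
`X(XᵀX − I_p)` are Frobenius-orthogonal, where `ψ(X) = ∇f(X)Xᵀ − X∇f(X)ᵀ`. -/
theorem relative_gradient_orthogonal_to_normal (n p : ℕ)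
    (f : Matrix (Fin n) (Fin p) ℝ → ℝ) (hf : ContDiff ℝ 1 f)
    (X G : Matrix (Fin n) (Fin p) ℝ)
    (hG : ∀ ξ : Matrix (Fin n) (Fin p) ℝ, fderiv ℝ f X ξ = (Gᵀ * ξ).trace) :
    (((G * Xᵀ - X * Gᵀ) * X)ᵀ * (X * (Xᵀ * X - 1))).trace = 0 := by
  have h : (((G * Xᵀ - X * Gᵀ) * X)ᵀ * (X * (Xᵀ * X - 1))).trace
      = ((Xᵀ * (G * Xᵀ - X * Gᵀ)ᵀ * X) * (Xᵀ * X - 1)).trace := by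
    rw [Matrix.transpose_mul]
    simp only [Matrix.mul_assoc]
  rw [h]
  apply trace_skew_symm
  · simp only [Matrix.transpose_mul, Matrix.transpose_sub, Matrix.transpose_transpose,
      Matrix.transpose_mul]
    simp only [Matrix.sub_mul, Matrix.mul_sub, Matrix.mul_assoc]
    abel
  · simp
end

section
/- Let Y ∈ R^{n×p} have full column rank. For every matrix ξ ∈ R^{n×p} satisfying ξᵀY + Yᵀξ = 0, there exists a skew-symmetric matrix W ∈ R^{n×n} such that ξ = WY. -/
open Matrix

/-- If `Y ∈ ℝ^{n×p}` has full column rank (`YᵀY` invertible), then every tangent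
vector `ξ` (i.e. `ξᵀY + Yᵀξ = 0`) can be written as `ξ = WY` for some
skew-symmetric `W ∈ ℝ^{n×n}`. -/
theorem tangent_eq_skew_mul (n p : ℕ) (Y : Matrix (Fin n) (Fin p) ℝ)
    (hY : IsUnit (Yᵀ * Y)) (ξ : Matrix (Fin n) (Fin p) ℝ)
    (hξ : ξᵀ * Y + Yᵀ * ξ = 0) :
    ∃ W : Matrix (Fin n) (Fin n) ℝ, Wᵀ = -W ∧ ξ = W * Y := by
  have hdet : IsUnit (Yᵀ * Y).det := (Matrix.isUnit_iff_isUnit_det _).mp hY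
  have hinv : (Yᵀ * Y)⁻¹ * (Yᵀ * Y) = 1 := Matrix.nonsing_inv_mul _ hdet
  have hinvT : ((Yᵀ * Y)⁻¹)ᵀ = (Yᵀ * Y)⁻¹ := by
    rw [Matrix.transpose_nonsing_inv]
    congr 1
    simp [Matrix.transpose_mul]
  have hskew : ξᵀ * Y = -(Yᵀ * ξ) := by linear_combination (norm := noncomm_ring) hξ
  refine ⟨ξ * (Yᵀ * Y)⁻¹ * Yᵀ - Y * (Yᵀ * Y)⁻¹ * ξᵀ
      + Y * (Yᵀ * Y)⁻¹ * (ξᵀ * Y) * (Yᵀ * Y)⁻¹ * Yᵀ, ?_, ?_⟩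
  · simp only [Matrix.transpose_add, Matrix.transpose_sub, Matrix.transpose_mul,
      Matrix.transpose_transpose, hinvT, hskew, Matrix.mul_neg, Matrix.neg_mul,
      neg_neg, Matrix.mul_assoc, neg_add, neg_sub, Matrix.transpose_neg, Matrix.transpose_smul]
  · simp only [Matrix.sub_mul, Matrix.add_mul, Matrix.mul_assoc, hinv, Matrix.mul_one,
      hskew, Matrix.mul_neg, Matrix.neg_mul, neg_neg]
    abel
end

section
/- Let Y ∈ R^{n×p} have full column rank. For every symmetric S ∈ R^{p×p} and every skew-symmetric W ∈ R^{n×n}, it holds that ⟨WY, (I_n − (1/2)·Y(YᵀY)^{-1}Yᵀ)·Y(YᵀY)^{-1}·S·(YᵀY)^{-1}⟩ = 0, where ⟨A,B⟩ = tr(AᵀB). -/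
open Matrix

/-- For `Y` of full column rank, every tangent vector `WY` (`W` skew-symmetric) is
orthogonal, with respect to the generalized canonical metric, to every normal
vector `Y(YᵀY)⁻¹S` (`S` symmetric):
`⟨WY, (I − (1/2)Y(YᵀY)⁻¹Yᵀ)·Y(YᵀY)⁻¹S(YᵀY)⁻¹⟩_F = 0`. -/
theorem normal_orthogonal_to_tangent (n p : ℕ) (Y : Matrix (Fin n) (Fin p) ℝ)
    (hY : IsUnit (Yᵀ * Y)) (S : Matrix (Fin p) (Fin p) ℝ) (hS : Sᵀ = S)
    (W : Matrix (Fin n) (Fin n) ℝ) (hW : Wᵀ = -W) :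
    ((W * Y)ᵀ *
      ((1 - (1/2 : ℝ) • (Y * (Yᵀ * Y)⁻¹ * Yᵀ)) *
        (Y * (Yᵀ * Y)⁻¹ * S * (Yᵀ * Y)⁻¹))).trace = 0 := by
  set G := Yᵀ * Y with hG
  have hGdet : IsUnit G.det := (Matrix.isUnit_iff_isUnit_det G).mp hY
  have hinv : G⁻¹ * G = 1 := Matrix.nonsing_inv_mul G hGdet
  have hGsym : Gᵀ = G := by rw [hG, Matrix.transpose_mul, Matrix.transpose_transpose]
  have hGinvsym : (G⁻¹)ᵀ = G⁻¹ := by rw [Matrix.transpose_nonsing_inv, hGsym]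
  -- collapse the metric factor
  have hcol : (Y * G⁻¹ * Yᵀ) * (Y * G⁻¹ * S * G⁻¹) = Y * (G⁻¹ * (S * G⁻¹)) := by
    simp only [Matrix.mul_assoc]
    rw [← Matrix.mul_assoc Yᵀ Y, ← hG, ← Matrix.mul_assoc G⁻¹ G, hinv, Matrix.one_mul]
  have key : (1 - (1/2 : ℝ) • (Y * G⁻¹ * Yᵀ)) * (Y * G⁻¹ * S * G⁻¹)
      = (1/2 : ℝ) • (Y * G⁻¹ * S * G⁻¹) := by
    rw [Matrix.sub_mul, Matrix.one_mul, Matrix.smul_mul, hcol]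
    rw [show Y * G⁻¹ * S * G⁻¹ = Y * (G⁻¹ * (S * G⁻¹)) by simp only [Matrix.mul_assoc]]
    module
  rw [key, Matrix.mul_smul, Matrix.trace_smul]
  set M := G⁻¹ * S * G⁻¹ with hMdef
  have hM : Mᵀ = M := by
    rw [hMdef, Matrix.transpose_mul, Matrix.transpose_mul, hGinvsym, hS, Matrix.mul_assoc]
  set A := Yᵀ * W * Y with hAdef
  have hA : Aᵀ = -A := by
    rw [hAdef, Matrix.transpose_mul, Matrix.transpose_mul, hW,
      Matrix.transpose_transpose, Matrix.neg_mul, Matrix.mul_neg, Matrix.mul_assoc]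
  have heq : (W * Y)ᵀ * (Y * G⁻¹ * S * G⁻¹) = -(A * M) := by
    rw [Matrix.transpose_mul, hW, hAdef, hMdef]
    simp only [Matrix.neg_mul, Matrix.mul_neg, Matrix.mul_assoc]
  have hzero : (A * M).trace = 0 := by
    have h1 : (A * M).trace = ((A * M)ᵀ).trace := (Matrix.trace_transpose _).symm
    have h2 : (A * M)ᵀ = M * (-A) := by rw [Matrix.transpose_mul, hM, hA]
    have h3 : (M * (-A)).trace = -(A * M).trace := by
      rw [Matrix.mul_neg, Matrix.trace_neg, Matrix.trace_mul_comm]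
    have := h1.trans (by rw [h2, h3])
    linarith
  rw [heq, Matrix.trace_neg, hzero, neg_zero, smul_zero]
end

section
/- Let X ∈ R^{n×p} have full column rank and let f: R^{n×p} → R be differentiable. Then for every skew-symmetric W ∈ R^{n×n}, g_X(ψ(X)X, WX) = ⟨∇f(X), WX⟩, where g_X(ξ,ζ) = ⟨ξ, (I_n − (1/2)X(XᵀX)^{-1}Xᵀ)ζ(XᵀX)^{-1}⟩ and ψ(X) = ∇f(X)Xᵀ − X∇f(X)ᵀ. -/
open Matrix

attribute [local instance] Matrix.frobeniusNormedAddCommGroup Matrix.frobeniusNormedSpace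

/-- For `X` of full column rank and `f` differentiable with Euclidean gradient
`G = ∇f(X)` at `X`, for every skew-symmetric `W`:
`g_X(ψ(X)X, WX) = ⟨∇f(X), WX⟩_F`, where
`g_X(ξ,ζ) = ⟨ξ, (I − (1/2)X(XᵀX)⁻¹Xᵀ)ζ(XᵀX)⁻¹⟩_F` and
`ψ(X) = ∇f(X)Xᵀ − X∇f(X)ᵀ`. -/
theorem riemannian_gradient_canonical (n p : ℕ)
    (f : Matrix (Fin n) (Fin p) ℝ → ℝ) (hf : Differentiable ℝ f)
    (X G : Matrix (Fin n) (Fin p) ℝ) (hX : IsUnit (Xᵀ * X))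
    (hG : ∀ ξ : Matrix (Fin n) (Fin p) ℝ, fderiv ℝ f X ξ = (Gᵀ * ξ).trace)
    (W : Matrix (Fin n) (Fin n) ℝ) (hW : Wᵀ = -W) :
    (((G * Xᵀ - X * Gᵀ) * X)ᵀ *
      ((1 - (1/2 : ℝ) • (X * (Xᵀ * X)⁻¹ * Xᵀ)) * (W * X) * (Xᵀ * X)⁻¹)).trace
      = (Gᵀ * (W * X)).trace := by
  set B := (Xᵀ * X)⁻¹ with hB
  have hdet : IsUnit (Xᵀ * X).det := (Matrix.isUnit_iff_isUnit_det _).mp hX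
  have h1 : (Xᵀ * X) * B = 1 := Matrix.mul_nonsing_inv _ hdet
  have h2 : B * (Xᵀ * X) = 1 := Matrix.nonsing_inv_mul _ hdet
  have hBt : Bᵀ = B := by
    rw [hB, Matrix.transpose_nonsing_inv]
    congr 1
    rw [Matrix.transpose_mul, Matrix.transpose_transpose]
  -- expand the product into four terms
  have key : ((G * Xᵀ - X * Gᵀ) * X)ᵀ *
      ((1 - (1/2 : ℝ) • (X * B * Xᵀ)) * (W * X) * B)
      = (Xᵀ*X*Gᵀ*(W*X)*B - Xᵀ*G*Xᵀ*(W*X)*B)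
        - (1/2:ℝ) • (Xᵀ*X*Gᵀ*(X*B*Xᵀ)*(W*X)*B - Xᵀ*G*Xᵀ*(X*B*Xᵀ)*(W*X)*B) := by
    simp only [Matrix.transpose_mul, Matrix.transpose_sub, Matrix.transpose_transpose,
      sub_mul, mul_sub, one_mul, smul_sub, smul_mul_assoc, mul_smul_comm,
      Matrix.sub_mul, Matrix.mul_sub, Matrix.smul_mul, Matrix.mul_smul,
      Matrix.one_mul, Matrix.mul_assoc]
  rw [key]
  rw [Matrix.trace_sub, Matrix.trace_sub, Matrix.trace_smul, Matrix.trace_sub, smul_eq_mul]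
  -- cancellation Xᵀ * (X*B*Xᵀ) = Xᵀ
  have hcancel : Xᵀ * (X*B*Xᵀ) = Xᵀ := by
    calc Xᵀ * (X*B*Xᵀ) = (Xᵀ*X*B)*Xᵀ := by simp [Matrix.mul_assoc]
    _ = Xᵀ := by rw [Matrix.mul_assoc Xᵀ X B] at h1 ⊢; rw [h1]; exact Matrix.one_mul _
  have T4 : Xᵀ*G*Xᵀ*(X*B*Xᵀ)*(W*X)*B = Xᵀ*G*Xᵀ*(W*X)*B := by
    have : Xᵀ*G*(Xᵀ*(X*B*Xᵀ)) = Xᵀ*G*Xᵀ := by rw [hcancel]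
    calc Xᵀ*G*Xᵀ*(X*B*Xᵀ)*(W*X)*B = Xᵀ*G*(Xᵀ*(X*B*Xᵀ))*(W*X)*B := by
          simp [Matrix.mul_assoc]
    _ = Xᵀ*G*Xᵀ*(W*X)*B := by rw [this]
  have T1 : (Xᵀ*X*Gᵀ*(W*X)*B).trace = (Gᵀ * (W * X)).trace := by
    have e : Xᵀ*X*Gᵀ*(W*X)*B = (Xᵀ*X) * (Gᵀ*(W*X)*B) := by simp [Matrix.mul_assoc]
    rw [e, Matrix.trace_mul_comm, Matrix.mul_assoc, h2, Matrix.mul_one]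
  have T3 : (Xᵀ*X*Gᵀ*(X*B*Xᵀ)*(W*X)*B).trace = (Gᵀ*(X*B*Xᵀ)*(W*X)).trace := by
    have e : Xᵀ*X*Gᵀ*(X*B*Xᵀ)*(W*X)*B = (Xᵀ*X) * (Gᵀ*(X*B*Xᵀ)*(W*X)*B) := by
      simp [Matrix.mul_assoc]
    rw [e, Matrix.trace_mul_comm, Matrix.mul_assoc, h2, Matrix.mul_one]
  have skew : (Gᵀ*(X*B*Xᵀ)*(W*X)).trace = -(Xᵀ*G*Xᵀ*(W*X)*B).trace := by
    have := Matrix.trace_transpose (Gᵀ*(X*B*Xᵀ)*(W*X))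
    rw [← this]
    have e : (Gᵀ*(X*B*Xᵀ)*(W*X))ᵀ = -(Xᵀ * (W * (X * (B * (Xᵀ * G))))) := by
      simp only [Matrix.transpose_mul, Matrix.transpose_transpose, hBt, hW,
        Matrix.neg_mul, Matrix.mul_neg, Matrix.mul_assoc]
    rw [e, Matrix.trace_neg, neg_inj]
    have em : Xᵀ * (W * (X * (B * (Xᵀ * G)))) = (Xᵀ * (W * (X * B))) * (Xᵀ * G) := by
      simp [Matrix.mul_assoc]
    have em2 : (Xᵀ * G) * (Xᵀ * (W * (X * B))) = Xᵀ*G*Xᵀ*(W*X)*B := by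
      simp [Matrix.mul_assoc]
    rw [em, Matrix.trace_mul_comm, em2]
  rw [T4, T3, skew, T1]
  ring
end

section
/- If X: [0,T) → R^{n×p} is differentiable and satisfies Ẋ(t) = −ψ(X(t))X(t) − λX(t)(X(t)ᵀX(t) − I_p) with λ > 0, then d/dt N(X(t)) = −λ‖X(t)(X(t)ᵀX(t) − I_p)‖_F² ≤ 0, where N(X) = (1/4)‖XᵀX − I_p‖_F². -/
open Matrix

attribute [local instance] Matrix.frobeniusNormedAddCommGroup Matrix.frobeniusNormedSpace

private lemma norm_sq_eq_trace {n p : ℕ} (A : Matrix (Fin n) (Fin p) ℝ) :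
    ‖A‖ ^ 2 = (Aᵀ * A).trace := by
  have h : ‖A‖ = (∑ i, ∑ j, ‖A i j‖ ^ (2:ℝ)) ^ (1/2 : ℝ) := Matrix.frobenius_norm_def A
  have hnn : (0:ℝ) ≤ ∑ i, ∑ j, ‖A i j‖ ^ (2:ℝ) := by positivity
  rw [h, ← Real.rpow_natCast _ 2, ← Real.rpow_mul hnn]
  norm_num
  rw [Matrix.trace, Finset.sum_comm]
  simp [Matrix.diag, Matrix.mul_apply, Real.rpow_two, sq_abs, sq]

private noncomputable def entryCLM (n p : ℕ) (i : Fin n) (j : Fin p) :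
    Matrix (Fin n) (Fin p) ℝ →L[ℝ] ℝ :=
  LinearMap.toContinuousLinearMap
    { toFun := fun M => M i j
      map_add' := fun _ _ => rfl
      map_smul' := fun _ _ => rfl }

private lemma sum_to_trace {p : ℕ} (M E : Matrix (Fin p) (Fin p) ℝ) :
    ∑ j, ∑ i, M i j * E i j = (Mᵀ * E).trace := by
  rw [Matrix.trace]
  simp [Matrix.diag, Matrix.mul_apply]

private lemma key_identity {n p : ℕ} (lam : ℝ) (A Gm : Matrix (Fin n) (Fin p) ℝ) :
    (((-((Gm * Aᵀ - A * Gmᵀ) * A) - lam • (A * (Aᵀ * A - 1)))ᵀ * A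
      + Aᵀ * (-((Gm * Aᵀ - A * Gmᵀ) * A) - lam • (A * (Aᵀ * A - 1))))ᵀ
      * (Aᵀ * A - 1)).trace
    = -2 * lam * ((A * (Aᵀ * A - 1))ᵀ * (A * (Aᵀ * A - 1))).trace := by
  set E : Matrix (Fin p) (Fin p) ℝ := Aᵀ * A - 1 with hE
  have hEt : Eᵀ = E := by
    rw [hE]
    simp [Matrix.transpose_sub, Matrix.transpose_mul]
  have hM : (-((Gm * Aᵀ - A * Gmᵀ) * A) - lam • (A * E))ᵀ * A
      + Aᵀ * (-((Gm * Aᵀ - A * Gmᵀ) * A) - lam • (A * E))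
      = -lam • (E * (Aᵀ * A) + (Aᵀ * A) * E) := by
    simp only [Matrix.transpose_sub, Matrix.transpose_neg, Matrix.transpose_mul,
      Matrix.transpose_smul, hEt, Matrix.transpose_transpose]
    simp only [Matrix.smul_mul, Matrix.mul_smul, Matrix.sub_mul, Matrix.mul_sub,
      Matrix.add_mul, Matrix.mul_add, Matrix.neg_mul, Matrix.mul_neg,
      smul_add, smul_sub, smul_neg, neg_smul, Matrix.mul_assoc]
    abel
  rw [hM]
  have hMt : (-lam • (E * (Aᵀ * A) + (Aᵀ * A) * E))ᵀ
      = -lam • (E * (Aᵀ * A) + (Aᵀ * A) * E) := by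
    simp only [Matrix.transpose_smul, Matrix.transpose_add, Matrix.transpose_mul, hEt,
      Matrix.transpose_transpose]
    rw [add_comm]
  rw [hMt]
  have hAE : (A * E)ᵀ * (A * E) = E * ((Aᵀ * A) * E) := by
    rw [Matrix.transpose_mul, hEt, Matrix.mul_assoc, Matrix.mul_assoc]
  rw [hAE]
  rw [Matrix.smul_mul, Matrix.add_mul, Matrix.trace_smul, Matrix.trace_add]
  have h1 : (E * (Aᵀ * A) * E).trace = (E * ((Aᵀ * A) * E)).trace := by
    rw [Matrix.mul_assoc]
  have h2 : ((Aᵀ * A) * E * E).trace = (E * ((Aᵀ * A) * E)).trace := by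
    rw [Matrix.trace_mul_comm, Matrix.mul_assoc]
  rw [h1, h2, smul_eq_mul]
  ring

/-- Along a solution of the landing system
`Ẋ(t) = −ψ(X(t))X(t) − λ X(t)(X(t)ᵀX(t) − I)` on `[0,T)` with `λ > 0`
(where `ψ(X) = ∇f(X)Xᵀ − X∇f(X)ᵀ` for a continuously differentiable `f` with
Euclidean gradient `G`), the function `N(X(t)) = (1/4)‖X(t)ᵀX(t) − I‖_F²` has
derivative `−λ‖X(t)(X(t)ᵀX(t) − I)‖_F² ≤ 0`. -/
theorem N_nonincreasing_along_landing_flow (n p : ℕ) (T lam : ℝ) (hlam : 0 < lam)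
    (f : Matrix (Fin n) (Fin p) ℝ → ℝ) (hf : ContDiff ℝ 1 f)
    (G : Matrix (Fin n) (Fin p) ℝ → Matrix (Fin n) (Fin p) ℝ)
    (hG : ∀ Y ξ : Matrix (Fin n) (Fin p) ℝ, fderiv ℝ f Y ξ = ((G Y)ᵀ * ξ).trace)
    (X : ℝ → Matrix (Fin n) (Fin p) ℝ)
    (hX : ∀ t ∈ Set.Ico (0 : ℝ) T,
      HasDerivAt X
        (-((G (X t) * (X t)ᵀ - X t * (G (X t))ᵀ) * X t)
          - lam • (X t * ((X t)ᵀ * X t - 1))) t) :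
    ∀ t ∈ Set.Ico (0 : ℝ) T,
      HasDerivAt (fun s => (1/4 : ℝ) * (((X s)ᵀ * X s - 1)ᵀ * ((X s)ᵀ * X s - 1)).trace)
        (-lam * ‖X t * ((X t)ᵀ * X t - 1)‖ ^ 2) t ∧
      -lam * ‖X t * ((X t)ᵀ * X t - 1)‖ ^ 2 ≤ 0 := by
  intro t ht
  have hnonpos : -lam * ‖X t * ((X t)ᵀ * X t - 1)‖ ^ 2 ≤ 0 := by
    have h0 : (0:ℝ) ≤ ‖X t * ((X t)ᵀ * X t - 1)‖ ^ 2 := sq_nonneg _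
    nlinarith
  refine ⟨?_, hnonpos⟩
  set A := X t with hA
  set D := -((G (X t) * (X t)ᵀ - X t * (G (X t))ᵀ) * X t)
          - lam • (X t * ((X t)ᵀ * X t - 1)) with hDdef
  have hXd : HasDerivAt X D t := hX t ht
  have hentry : ∀ (i : Fin n) (j : Fin p), HasDerivAt (fun s => X s i j) (D i j) t :=
    fun i j => ((entryCLM n p i j).hasFDerivAt.comp_hasDerivAt t hXd)
  set E : Matrix (Fin p) (Fin p) ℝ := Aᵀ * A - 1 with hEdef
  set M : Matrix (Fin p) (Fin p) ℝ := Dᵀ * A + Aᵀ * D with hMdef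
  have hEderiv : ∀ (i j : Fin p),
      HasDerivAt (fun s => ((X s)ᵀ * X s - 1 : Matrix (Fin p) (Fin p) ℝ) i j) (M i j) t := by
    intro i j
    have h1 : HasDerivAt (fun s => (∑ k, X s k i * X s k j) - (1 : Matrix (Fin p) (Fin p) ℝ) i j)
        (∑ k, (D k i * X t k j + X t k i * D k j)) t :=
      (HasDerivAt.fun_sum (fun k _ => (hentry k i).mul (hentry k j))).sub_const _
    have heq : (fun s => ((X s)ᵀ * X s - 1 : Matrix (Fin p) (Fin p) ℝ) i j)
        = fun s => (∑ k, X s k i * X s k j) - (1 : Matrix (Fin p) (Fin p) ℝ) i j := by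
      funext s
      simp [Matrix.sub_apply, Matrix.mul_apply, Matrix.transpose_apply]
    have hval : (∑ k, (D k i * X t k j + X t k i * D k j)) = M i j := by
      rw [hMdef]
      simp [Matrix.add_apply, Matrix.mul_apply, Matrix.transpose_apply, ← hA,
        Finset.sum_add_distrib]
    rw [heq, ← hval]
    exact h1
  have hfun : (fun s => (1/4 : ℝ) * (((X s)ᵀ * X s - 1)ᵀ * ((X s)ᵀ * X s - 1)).trace)
      = fun s => (1/4 : ℝ) * ∑ j, ∑ i, ((X s)ᵀ * X s - 1 : Matrix (Fin p) (Fin p) ℝ) i j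
          * ((X s)ᵀ * X s - 1 : Matrix (Fin p) (Fin p) ℝ) i j := by
    funext s
    congr 1
  have hder : HasDerivAt
      (fun s => (1/4 : ℝ) * ∑ j, ∑ i, ((X s)ᵀ * X s - 1 : Matrix (Fin p) (Fin p) ℝ) i j
          * ((X s)ᵀ * X s - 1 : Matrix (Fin p) (Fin p) ℝ) i j)
      ((1/4 : ℝ) * ∑ j, ∑ i, (M i j * E i j + E i j * M i j)) t := by
    refine HasDerivAt.const_mul _ ?_
    refine HasDerivAt.fun_sum (fun j _ => HasDerivAt.fun_sum (fun i _ => ?_))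
    have h := (hEderiv i j).mul (hEderiv i j)
    have hEval : ((X t)ᵀ * X t - 1 : Matrix (Fin p) (Fin p) ℝ) i j = E i j := by
      rw [hEdef, hA]
    rw [hEval] at h
    exact h
  have hval2 : (1/4 : ℝ) * ∑ j, ∑ i, (M i j * E i j + E i j * M i j)
      = -lam * ‖A * E‖ ^ 2 := by
    have h2 : ∑ j, ∑ i, (M i j * E i j + E i j * M i j)
        = 2 * ∑ j, ∑ i, M i j * E i j := by
      rw [Finset.mul_sum]
      refine Finset.sum_congr rfl (fun j _ => ?_)
      rw [Finset.mul_sum]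
      refine Finset.sum_congr rfl (fun i _ => ?_)
      ring
    rw [h2, sum_to_trace]
    have hkey := key_identity lam A (G (X t))
    rw [← hEdef, ← hDdef, ← hMdef] at hkey
    rw [hkey, norm_sq_eq_trace (A * E)]
    ring
  rw [hfun, ← hval2]
  exact hder
end

section
/- If X(t) solves the landing system Ẋ = −ψ(X)X − λX(XᵀX − I_p), then χ(t) = X(t)ᵀX(t) satisfies the matrix ODE χ̇(t) = −2λ·χ(t)(χ(t) − I_p). -/
open Matrix

attribute [local instance] Matrix.frobeniusNormedAddCommGroup Matrix.frobeniusNormedSpace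

section
attribute [-instance] instTopologicalSpaceMatrix Matrix.instUniformSpace

noncomputable def mulCLM (n p : ℕ) :
    Matrix (Fin p) (Fin n) ℝ →L[ℝ] Matrix (Fin n) (Fin p) ℝ →L[ℝ] Matrix (Fin p) (Fin p) ℝ :=
  LinearMap.toContinuousLinearMap <|
    { toFun := fun A => LinearMap.toContinuousLinearMap
        { toFun := fun B => A * B
          map_add' := by intros; simp [Matrix.mul_add]
          map_smul' := by intros; simp [Matrix.mul_smul] }
      map_add' := by intros; ext B; simp [Matrix.add_mul]
      map_smul' := by intros; ext B; simp [Matrix.smul_mul] }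

noncomputable def transCLM (n p : ℕ) :
    Matrix (Fin n) (Fin p) ℝ →L[ℝ] Matrix (Fin p) (Fin n) ℝ :=
  LinearMap.toContinuousLinearMap
    { toFun := fun A => Aᵀ
      map_add' := by intros; simp
      map_smul' := by intros; simp }

end

theorem matmul_deriv {n p : ℕ} {X : ℝ → Matrix (Fin n) (Fin p) ℝ}
    {X' : Matrix (Fin n) (Fin p) ℝ} {t : ℝ} (h : HasDerivAt X X' t) :
    HasDerivAt (fun s => (X s)ᵀ * X s) (X'ᵀ * X t + (X t)ᵀ * X') t := by
  have h1 : HasDerivAt (fun s => mulCLM n p ((transCLM n p) (X s)))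
      (mulCLM n p ((transCLM n p) X')) t :=
    ((mulCLM n p).hasFDerivAt.comp_hasDerivAt t ((transCLM n p).hasFDerivAt.comp_hasDerivAt t h))
  have := h1.clm_apply h
  exact this

/-- If `X(t)` solves the landing system `Ẋ = −ψ(X)X − λX(XᵀX − I)`, then
`χ(t) = X(t)ᵀX(t)` satisfies `χ̇(t) = −2λ χ(t)(χ(t) − I)`. -/
theorem gram_matrix_ode (n p : ℕ) (lam : ℝ) (hlam : 0 < lam)
    (f : Matrix (Fin n) (Fin p) ℝ → ℝ) (hf : Differentiable ℝ f)
    (G : Matrix (Fin n) (Fin p) ℝ → Matrix (Fin n) (Fin p) ℝ)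
    (hG : ∀ Y ξ : Matrix (Fin n) (Fin p) ℝ, fderiv ℝ f Y ξ = ((G Y)ᵀ * ξ).trace)
    (X : ℝ → Matrix (Fin n) (Fin p) ℝ)
    (hX : ∀ t : ℝ,
      HasDerivAt X
        (-((G (X t) * (X t)ᵀ - X t * (G (X t))ᵀ) * X t)
          - lam • (X t * ((X t)ᵀ * X t - 1))) t) :
    ∀ t : ℝ,
      HasDerivAt (fun s => (X s)ᵀ * X s)
        (-(2 * lam) • ((X t)ᵀ * X t * ((X t)ᵀ * X t - 1))) t := by
  intro t
  have h := matmul_deriv (hX t)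
  convert h using 1
  set A := X t
  set g := G (X t)
  simp only [transpose_sub, transpose_neg, transpose_smul, transpose_mul, transpose_transpose,
    transpose_one, Matrix.mul_sub, Matrix.sub_mul, Matrix.mul_one, Matrix.one_mul,
    Matrix.neg_mul, Matrix.mul_neg, Matrix.smul_mul, Matrix.mul_smul, Matrix.mul_assoc,
    smul_sub, sub_mul, mul_sub]
  module
end

section
/- Let A: [0,∞) → R^{p×p} be symmetric-matrix-valued and solve Ȧ(t) = −2λA(t)(A(t) − I_p) with A(0) symmetric positive definite and λ > 0. Then A(t) is symmetric positive definite for all t ≥ 0 and A(t) → I_p as t → ∞. -/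
open Matrix Filter

attribute [local instance] Matrix.frobeniusNormedAddCommGroup Matrix.frobeniusNormedSpace

private lemma den_pos {lam mu : ℝ} (hlam : 0 < lam) (hmu : 0 < mu) {t : ℝ} (ht : 0 ≤ t) :
    0 < mu + (1 - mu) * Real.exp (-(2 * lam) * t) := by
  have hs0 : 0 < Real.exp (-(2 * lam) * t) := Real.exp_pos _
  have hs1 : Real.exp (-(2 * lam) * t) ≤ 1 := by
    rw [Real.exp_le_one_iff]
    nlinarith
  nlinarith [mul_nonneg hmu.le (sub_nonneg.2 hs1)]

private lemma logistic_hasDerivAt {lam mu : ℝ} (t : ℝ)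
    (hne : mu + (1 - mu) * Real.exp (-(2 * lam) * t) ≠ 0) :
    HasDerivAt (fun t => mu / (mu + (1 - mu) * Real.exp (-(2 * lam) * t)))
      (-(2 * lam) * ((mu / (mu + (1 - mu) * Real.exp (-(2 * lam) * t))) *
        ((mu / (mu + (1 - mu) * Real.exp (-(2 * lam) * t))) - 1))) t := by
  have h1 : HasDerivAt (fun t : ℝ => -(2 * lam) * t) (-(2 * lam)) t := by
    simpa using (hasDerivAt_id t).const_mul (-(2 * lam))
  have hexp : HasDerivAt (fun t => Real.exp (-(2 * lam) * t))
      (Real.exp (-(2 * lam) * t) * -(2 * lam)) t := (Real.hasDerivAt_exp _).comp t h1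
  have hden : HasDerivAt (fun t => mu + (1 - mu) * Real.exp (-(2 * lam) * t))
      ((1 - mu) * (Real.exp (-(2 * lam) * t) * -(2 * lam))) t :=
    ((hexp.const_mul (1 - mu)).const_add mu)
  have h := (hasDerivAt_const t mu).div hden hne
  convert h using 1
  · rfl
  · rfl
  · rfl
  generalize Real.exp (-(2 * lam) * t) = s at hne ⊢
  field_simp
  ring

private lemma posDef_conj {p : ℕ} {V : Matrix (Fin p) (Fin p) ℝ}
    (hV : V * star V = 1) {d : Fin p → ℝ} (hd : ∀ i, 0 < d i) :
    (V * diagonal d * star V).PosDef := by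
  have h1 : (diagonal d).PosDef := Matrix.PosDef.diagonal hd
  refine Matrix.PosDef.of_dotProduct_mulVec_pos ?_ ?_
  · have : (V * diagonal d * star V)ᴴ = V * (diagonal d)ᴴ * star V := by
      simp [conjTranspose_mul, Matrix.mul_assoc, Matrix.star_eq_conjTranspose]
    rw [Matrix.IsHermitian, this, h1.1.eq]
  · intro x hx
    have hy : star V *ᵥ x ≠ 0 := by
      intro h
      apply hx
      have hxx : V *ᵥ (star V *ᵥ x) = x := by
        rw [mulVec_mulVec, hV, one_mulVec]
      rw [h, mulVec_zero] at hxx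
      exact hxx.symm
    have key : star x ⬝ᵥ ((V * diagonal d * star V) *ᵥ x)
        = star (star V *ᵥ x) ⬝ᵥ (diagonal d *ᵥ (star V *ᵥ x)) := by
      rw [← mulVec_mulVec, ← mulVec_mulVec, dotProduct_mulVec (star x), star_mulVec,
        Matrix.star_eq_conjTranspose, conjTranspose_conjTranspose, dotProduct_mulVec]
    rw [key]
    exact h1.dotProduct_mulVec_pos hy

private noncomputable def conjCLM {p : ℕ} (V : Matrix (Fin p) (Fin p) ℝ) :
    (Fin p → ℝ) →L[ℝ] Matrix (Fin p) (Fin p) ℝ :=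
  LinearMap.toContinuousLinearMap
    { toFun := fun d => V * Matrix.diagonal d * star V
      map_add' := fun a b => by
        have h : Matrix.diagonal (a + b) = Matrix.diagonal a + Matrix.diagonal b :=
          (Matrix.diagonal_add a b).symm
        rw [h, Matrix.mul_add, Matrix.add_mul]
      map_smul' := fun r a => by
        rw [Matrix.diagonal_smul, Matrix.mul_smul, Matrix.smul_mul, RingHom.id_apply] }

@[simp] private lemma conjCLM_apply {p : ℕ} (V : Matrix (Fin p) (Fin p) ℝ) (d : Fin p → ℝ) :
    conjCLM V d = V * Matrix.diagonal d * star V := rfl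

private lemma lip_conj {p : ℕ} (lam R : ℝ) (hlam : 0 < lam) (hR : 0 ≤ R) :
    LipschitzOnWith (Real.toNNReal (2 * lam * (2 * R + 1)))
      (fun X : Matrix (Fin p) (Fin p) ℝ => -(2 * lam) • (X * (X - 1)))
      (Metric.closedBall 0 R) := by
  rw [lipschitzOnWith_iff_dist_le_mul]
  intro X hX Y hY
  rw [mem_closedBall_zero_iff] at hX hY
  rw [dist_eq_norm, dist_eq_norm]
  have key : -(2 * lam) • (X * (X - 1)) - -(2 * lam) • (Y * (Y - 1))
      = -(2 * lam) • (X * (X - Y) + (X - Y) * Y - (X - Y)) := by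
    rw [← smul_sub]
    congr 1
    noncomm_ring
  rw [key, norm_smul]
  have h1 : ‖X * (X - Y) + (X - Y) * Y - (X - Y)‖ ≤ (2 * R + 1) * ‖X - Y‖ := by
    calc ‖X * (X - Y) + (X - Y) * Y - (X - Y)‖
        ≤ ‖X * (X - Y) + (X - Y) * Y‖ + ‖X - Y‖ := norm_sub_le _ _
      _ ≤ ‖X * (X - Y)‖ + ‖(X - Y) * Y‖ + ‖X - Y‖ := by
          gcongr; exact norm_add_le _ _
      _ ≤ ‖X‖ * ‖X - Y‖ + ‖X - Y‖ * ‖Y‖ + ‖X - Y‖ := by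
          gcongr <;> exact Matrix.frobenius_norm_mul _ _
      _ ≤ R * ‖X - Y‖ + ‖X - Y‖ * R + ‖X - Y‖ := by
          gcongr
      _ = (2 * R + 1) * ‖X - Y‖ := by ring
  have h2 : ‖(-(2 * lam) : ℝ)‖ = 2 * lam := by
    rw [norm_neg, Real.norm_eq_abs, abs_of_pos (by linarith)]
  rw [h2]
  rw [Real.coe_toNNReal _ (by positivity)]
  calc 2 * lam * ‖X * (X - Y) + (X - Y) * Y - (X - Y)‖
      ≤ 2 * lam * ((2 * R + 1) * ‖X - Y‖) := by gcongr
    _ = 2 * lam * (2 * R + 1) * ‖X - Y‖ := by ring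


/-- If `A(t)` is symmetric-matrix-valued, solves `Ȧ = −2λA(A − I)` with `λ > 0`,
and `A(0)` is symmetric positive definite, then `A(t)` remains symmetric positive
definite for all `t ≥ 0` and `A(t) → I` as `t → ∞`. -/
theorem matrix_logistic_ode (p : ℕ) (lam : ℝ) (hlam : 0 < lam)
    (A : ℝ → Matrix (Fin p) (Fin p) ℝ)
    (hsym : ∀ t ∈ Set.Ici (0 : ℝ), (A t)ᵀ = A t)
    (hode : ∀ t ∈ Set.Ici (0 : ℝ),
      HasDerivAt A (-(2 * lam) • (A t * (A t - 1))) t)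
    (h0 : (A 0).PosDef) :
    (∀ t ∈ Set.Ici (0 : ℝ), (A t).PosDef) ∧
    Tendsto A atTop (nhds (1 : Matrix (Fin p) (Fin p) ℝ)) := by
  classical
  have hH : (A 0).IsHermitian := h0.1
  obtain ⟨μ, V, hμ, hVV, hsVV, hspec⟩ : ∃ (μ : Fin p → ℝ) (V : Matrix (Fin p) (Fin p) ℝ),
      (∀ i, 0 < μ i) ∧ V * star V = 1 ∧ star V * V = 1 ∧
        A 0 = V * Matrix.diagonal μ * star V := by
    refine ⟨hH.eigenvalues, hH.eigenvectorUnitary, fun i => h0.eigenvalues_pos i,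
      Matrix.mem_unitaryGroup_iff.mp hH.eigenvectorUnitary.2,
      Matrix.mem_unitaryGroup_iff'.mp hH.eigenvectorUnitary.2, ?_⟩
    have hs := hH.spectral_theorem
    simpa [RCLike.ofReal_real_eq_id, Function.comp] using hs
  set c : Fin p → ℝ → ℝ :=
    fun i t => μ i / (μ i + (1 - μ i) * Real.exp (-(2 * lam) * t)) with hcdef
  set B : ℝ → Matrix (Fin p) (Fin p) ℝ := fun t => conjCLM V (fun i => c i t) with hBdef
  have hden : ∀ (i) (t : ℝ), 0 ≤ t → 0 < μ i + (1 - μ i) * Real.exp (-(2 * lam) * t) :=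
    fun i t ht => den_pos hlam (hμ i) ht
  have hcpos : ∀ (i) (t : ℝ), 0 ≤ t → 0 < c i t := fun i t ht => div_pos (hμ i) (hden i t ht)
  have hB0 : B 0 = A 0 := by
    have hc0 : (fun i => c i 0) = μ := by
      funext i
      simp [hcdef]
    show conjCLM V (fun i => c i 0) = A 0
    rw [conjCLM_apply, hc0, hspec]
  have hBderiv : ∀ t : ℝ, 0 ≤ t → HasDerivAt B (-(2 * lam) • (B t * (B t - 1))) t := by
    intro t ht
    have hc' : ∀ i, HasDerivAt (fun s => c i s) (-(2 * lam) * (c i t * (c i t - 1))) t :=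
      fun i => logistic_hasDerivAt t (ne_of_gt (hden i t ht))
    have hcv : HasDerivAt (fun s => (fun i => c i s))
        (fun i => -(2 * lam) * (c i t * (c i t - 1))) t := hasDerivAt_pi.2 hc'
    have h1 : HasDerivAt B (conjCLM V (fun i => -(2 * lam) * (c i t * (c i t - 1)))) t :=
      (conjCLM V).hasFDerivAt.comp_hasDerivAt t hcv
    have hBB : B t * (B t - 1) = conjCLM V (fun i => c i t * (c i t - 1)) := by
      have e1 : (fun i => c i t * (c i t - 1))
          = (fun i => c i t * c i t) - (fun i => c i t) := by
        funext i
        simp [mul_sub]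
      rw [e1, map_sub, mul_sub, mul_one]
      congr 1
      show (V * Matrix.diagonal (fun i => c i t) * star V) *
          (V * Matrix.diagonal (fun i => c i t) * star V)
          = V * Matrix.diagonal (fun i => c i t * c i t) * star V
      simp only [Matrix.mul_assoc]
      rw [← Matrix.mul_assoc (star V) V, hsVV, Matrix.one_mul,
        ← Matrix.mul_assoc (Matrix.diagonal _) (Matrix.diagonal _),
        Matrix.diagonal_mul_diagonal]
    have halg : conjCLM V (fun i => -(2 * lam) * (c i t * (c i t - 1)))
        = -(2 * lam) • (B t * (B t - 1)) := by
      rw [hBB, ← _root_.map_smul]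
      rfl
    rw [halg] at h1
    exact h1
  have hBpos : ∀ t : ℝ, 0 ≤ t → (B t).PosDef :=
    fun t ht => posDef_conj hVV (fun i => hcpos i t ht)
  have hclim : ∀ i, Tendsto (fun t => c i t) atTop (nhds 1) := by
    intro i
    have hexp : Tendsto (fun t : ℝ => Real.exp (-(2 * lam) * t)) atTop (nhds 0) := by
      have h2 : Tendsto (fun t : ℝ => (2 * lam) * t) atTop atTop :=
        Tendsto.const_mul_atTop (by linarith) tendsto_id
      exact (Real.tendsto_exp_neg_atTop_nhds_zero.comp h2).congr
        (fun t => by simp [Function.comp, neg_mul])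
    have hd : Tendsto (fun t => μ i + (1 - μ i) * Real.exp (-(2 * lam) * t))
        atTop (nhds (μ i)) := by
      have h4 := (hexp.const_mul (1 - μ i)).const_add (μ i)
      simpa using h4
    have h5 := (tendsto_const_nhds (x := μ i) (f := atTop)).div hd (ne_of_gt (hμ i))
    rw [div_self (ne_of_gt (hμ i))] at h5
    exact h5
  have hBlim : Tendsto B atTop (nhds 1) := by
    have hcv : Tendsto (fun t => (fun i => c i t)) atTop (nhds (fun _ => 1)) :=
      tendsto_pi_nhds.2 hclim
    have h6 := ((conjCLM V).continuous.tendsto _).comp hcv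
    have h1 : conjCLM V (fun _ : Fin p => (1 : ℝ)) = 1 := by
      rw [conjCLM_apply]
      have hd1 : Matrix.diagonal (fun _ : Fin p => (1 : ℝ)) = 1 := Matrix.diagonal_one
      rw [hd1, Matrix.mul_one, hVV]
    rw [h1] at h6
    exact h6
  have hAB : ∀ t : ℝ, 0 ≤ t → A t = B t := by
    intro T hT
    have hAcont : ContinuousOn A (Set.Icc 0 T) := fun s hs =>
      (hode s hs.1).continuousAt.continuousWithinAt
    have hBcont : ContinuousOn B (Set.Icc 0 T) := fun s hs =>
      (hBderiv s hs.1).continuousAt.continuousWithinAt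
    obtain ⟨C1, hC1⟩ := isCompact_Icc.exists_bound_of_continuousOn hAcont
    obtain ⟨C2, hC2⟩ := isCompact_Icc.exists_bound_of_continuousOn hBcont
    set R : ℝ := max (max C1 C2) 0 with hRdef
    have hR0 : 0 ≤ R := le_max_right _ _
    have hlip := lip_conj (p := p) lam R hlam hR0
    have key := ODE_solution_unique_of_mem_Icc_right
      (v := fun _ X => -(2 * lam) • (X * (X - 1)))
      (s := fun _ => Metric.closedBall (0 : Matrix (Fin p) (Fin p) ℝ) R)
      (K := Real.toNNReal (2 * lam * (2 * R + 1)))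
      (fun _ _ => hlip)
      hAcont
      (fun s hs => (hode s hs.1).hasDerivWithinAt)
      (fun s hs => mem_closedBall_zero_iff.2
        ((hC1 s (Set.Ico_subset_Icc_self hs)).trans ((le_max_left C1 C2).trans (le_max_left _ _))))
      hBcont
      (fun s hs => (hBderiv s hs.1).hasDerivWithinAt)
      (fun s hs => mem_closedBall_zero_iff.2
        ((hC2 s (Set.Ico_subset_Icc_self hs)).trans ((le_max_right C1 C2).trans (le_max_left _ _))))
      hB0.symm
    exact key (Set.right_mem_Icc.2 hT)
  refine ⟨fun t ht => ?_, ?_⟩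
  · rw [hAB t ht]
    exact hBpos t ht
  · have hEq : B =ᶠ[atTop] A := by
      filter_upwards [eventually_ge_atTop (0 : ℝ)] with t ht
      exact (hAB t ht).symm
    exact hBlim.congr' hEq
end

section
/- Let X ∈ R^{n×p} have full column rank. Then Λ(X) = 0 if and only if XᵀX = I_p and ψ(X)X = 0, where Λ(X) = ψ(X)X + λX(XᵀX − I_p) with λ > 0. -/
open Matrix

attribute [local instance] Matrix.frobeniusNormedAddCommGroup Matrix.frobeniusNormedSpace

lemma trace_transpose_mul_self_nonneg {n p : ℕ} (A : Matrix (Fin n) (Fin p) ℝ) :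
    0 ≤ (Aᵀ * A).trace := by
  simp only [Matrix.trace, Matrix.diag, Matrix.mul_apply, Matrix.transpose_apply]
  exact Finset.sum_nonneg fun j _ => Finset.sum_nonneg fun i _ => mul_self_nonneg _

lemma eq_zero_of_trace_transpose_mul_self {n p : ℕ} (A : Matrix (Fin n) (Fin p) ℝ)
    (h : (Aᵀ * A).trace = 0) : A = 0 := by
  ext i j
  simp only [Matrix.trace, Matrix.diag, Matrix.mul_apply, Matrix.transpose_apply] at h
  have h' := (Finset.sum_eq_zero_iff_of_nonneg (fun j _ =>
    Finset.sum_nonneg fun i _ => mul_self_nonneg (A i j))).mp h j (Finset.mem_univ j)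
  have := (Finset.sum_eq_zero_iff_of_nonneg (fun i _ =>
    mul_self_nonneg (A i j))).mp h' i (Finset.mem_univ i)
  simpa [mul_self_eq_zero] using this

/-- For `X` of full column rank, the landing field
`Λ(X) = ψ(X)X + λX(XᵀX − I)` (with `λ > 0`) vanishes if and only if
`XᵀX = I` and `ψ(X)X = 0`. -/
theorem landing_field_zero_iff (n p : ℕ) (lam : ℝ) (hlam : 0 < lam)
    (f : Matrix (Fin n) (Fin p) ℝ → ℝ) (hf : Differentiable ℝ f)
    (X G : Matrix (Fin n) (Fin p) ℝ) (hX : IsUnit (Xᵀ * X))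
    (hG : ∀ ξ : Matrix (Fin n) (Fin p) ℝ, fderiv ℝ f X ξ = (Gᵀ * ξ).trace) :
    (G * Xᵀ - X * Gᵀ) * X + lam • (X * (Xᵀ * X - 1)) = 0 ↔
      Xᵀ * X = 1 ∧ (G * Xᵀ - X * Gᵀ) * X = 0 := by
  set ψ : Matrix (Fin n) (Fin n) ℝ := G * Xᵀ - X * Gᵀ with hψ
  have hψT : ψᵀ = -ψ := by
    simp [hψ, Matrix.transpose_sub, Matrix.transpose_mul]
  have hψ2 : ψ = -ψᵀ := by rw [hψT, neg_neg]
  set A : Matrix (Fin n) (Fin p) ℝ := ψ * X with hA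
  set B : Matrix (Fin n) (Fin p) ℝ := X * (Xᵀ * X - 1) with hB
  set M : Matrix (Fin n) (Fin n) ℝ := X * (Xᵀ * X - 1) * Xᵀ with hMdef
  constructor
  · intro h
    have hM : Mᵀ = M := by
      simp only [hMdef, Matrix.transpose_mul, Matrix.transpose_sub, Matrix.transpose_one,
        Matrix.transpose_transpose, Matrix.mul_assoc]
    have hkey : (ψᵀ * M).trace = 0 := by
      have e1 : (ψᵀ * M).trace = -(ψᵀ * M).trace := by
        conv_lhs => rw [← Matrix.trace_transpose, Matrix.transpose_mul,
          Matrix.transpose_transpose, hM, Matrix.trace_mul_comm, hψ2]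
        rw [Matrix.neg_mul, Matrix.trace_neg]
      linarith
    have hortho : (Aᵀ * B).trace = 0 := by
      have h1 : (Aᵀ * B).trace = (ψᵀ * M).trace := by
        rw [hA, hB, hMdef, Matrix.transpose_mul, Matrix.mul_assoc, Matrix.trace_mul_comm]
        simp only [Matrix.mul_assoc]
      rw [h1, hkey]
    have hBA : (Bᵀ * A).trace = 0 := by
      rw [← Matrix.trace_transpose, Matrix.transpose_mul, Matrix.transpose_transpose, hortho]
    have hexp : (Aᵀ * A).trace + lam ^ 2 * (Bᵀ * B).trace = 0 := by
      have := congrArg (fun M : Matrix (Fin n) (Fin p) ℝ => ((M)ᵀ * M).trace) h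
      simp only [Matrix.transpose_add, Matrix.transpose_smul, Matrix.add_mul,
        Matrix.mul_add, Matrix.smul_mul, Matrix.mul_smul, Matrix.trace_add,
        Matrix.trace_smul, smul_smul, Matrix.mul_zero, Matrix.zero_mul,
        Matrix.trace_zero, smul_eq_mul] at this
      rw [hortho, hBA] at this
      ring_nf at this ⊢
      linarith [this]
    have hAnn := trace_transpose_mul_self_nonneg A
    have hBnn := trace_transpose_mul_self_nonneg B
    have hlam2 : 0 < lam ^ 2 := pow_pos hlam 2
    have hA0 : (Aᵀ * A).trace = 0 := by nlinarith
    have hB0 : (Bᵀ * B).trace = 0 := by nlinarith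
    have hAz := eq_zero_of_trace_transpose_mul_self A hA0
    have hBz := eq_zero_of_trace_transpose_mul_self B hB0
    have hS : Xᵀ * X = 1 := by
      have hz : Xᵀ * X * (Xᵀ * X - 1) = 0 := by
        rw [Matrix.mul_assoc, ← hB, hBz, Matrix.mul_zero]
      obtain ⟨u, hu⟩ := hX
      have h2 := congrArg (fun M => (↑u⁻¹ : Matrix (Fin p) (Fin p) ℝ) * M) hz
      simp only [← mul_assoc, ← hu, Units.inv_mul, one_mul, mul_zero] at h2
      exact hu ▸ sub_eq_zero.mp h2
    exact ⟨hS, hAz⟩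
  · rintro ⟨hS, hA0⟩
    rw [hA] at hA0 ⊢
    rw [hB, hA0, hS]
    simp
end

section
/- Let X ∈ R^{n×p} have full column rank, and define Π_X(ξ) = ξXᵀX + XXᵀξ on the tangent space T_X = {ξ : ξᵀX + Xᵀξ = 0}. Then Π_X maps T_X into T_X and is a linear bijection of T_X onto itself. -/
open Matrix

private lemma trace_tmul_nonneg {m k : ℕ} (M : Matrix (Fin m) (Fin k) ℝ) :
    0 ≤ (Mᵀ * M).trace := by
  rw [Matrix.trace]
  refine Finset.sum_nonneg fun j _ => ?_
  simp only [Matrix.diag_apply, Matrix.mul_apply, Matrix.transpose_apply]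
  exact Finset.sum_nonneg fun i _ => mul_self_nonneg _

private lemma eq_zero_of_trace_tmul {m k : ℕ} (M : Matrix (Fin m) (Fin k) ℝ)
    (h : (Mᵀ * M).trace = 0) : M = 0 := by
  ext i j
  have h' : ∀ j' ∈ Finset.univ, (0:ℝ) ≤ (Mᵀ * M) j' j' := fun j' _ => by
    simp only [Matrix.mul_apply, Matrix.transpose_apply]
    exact Finset.sum_nonneg fun i _ => mul_self_nonneg _
  have hjj : (Mᵀ * M) j j = 0 :=
    le_antisymm (by
      have := (Finset.sum_eq_zero_iff_of_nonneg h').mp h j (Finset.mem_univ j)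
      exact le_of_eq this) (h' j (Finset.mem_univ j))
  simp only [Matrix.mul_apply, Matrix.transpose_apply] at hjj
  have := (Finset.sum_eq_zero_iff_of_nonneg (fun i _ => mul_self_nonneg (M i j))).mp hjj
    i (Finset.mem_univ i)
  simpa [mul_self_eq_zero] using this

open scoped MatrixOrder in
private lemma lyap_inj {q : ℕ} {A : Matrix (Fin q) (Fin q) ℝ}
    (hA : A.PosSemidef) (hU : IsUnit A) {Ω : Matrix (Fin q) (Fin q) ℝ}
    (h : Ω * A + A * Ω = 0) : Ω = 0 := by
  set S := CFC.sqrt A with hSdef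
  have hSS : S * S = A := CFC.sqrt_mul_sqrt_self A hA.nonneg
  have hSsym : Sᵀ = S := by
    have : Sᴴ = S := (CFC.sqrt_nonneg A).posSemidef.1
    rwa [Matrix.conjTranspose_eq_transpose_of_trivial] at this
  have hSU : IsUnit S := by
    rw [Matrix.isUnit_iff_isUnit_det] at hU ⊢
    rw [← hSS, Matrix.det_mul] at hU
    exact isUnit_of_mul_isUnit_left hU
  have h0 : (Ωᵀ * (Ω * A)).trace + (Ωᵀ * (A * Ω)).trace = 0 := by
    have := congrArg (fun M => (Ωᵀ * M).trace) h
    simpa [Matrix.mul_add] using this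
  have e1 : ((Ω * S)ᵀ * (Ω * S)).trace = (Ωᵀ * (Ω * A)).trace := by
    rw [Matrix.transpose_mul, hSsym,
      show S * Ωᵀ * (Ω * S) = S * (Ωᵀ * (Ω * S)) by rw [mul_assoc],
      Matrix.trace_mul_comm,
      show Ωᵀ * (Ω * S) * S = Ωᵀ * (Ω * (S * S)) by simp only [mul_assoc], hSS]
  have e2 : ((S * Ω)ᵀ * (S * Ω)).trace = (Ωᵀ * (A * Ω)).trace := by
    rw [Matrix.transpose_mul, hSsym,
      show Ωᵀ * S * (S * Ω) = Ωᵀ * (S * S * Ω) by simp only [mul_assoc], hSS]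
  have h1 : ((S * Ω)ᵀ * (S * Ω)).trace = 0 := by
    have n1 := trace_tmul_nonneg (Ω * S)
    have n2 := trace_tmul_nonneg (S * Ω)
    rw [e1] at n1; rw [e2] at n2; rw [e2]; linarith
  have hSΩ : S * Ω = 0 := eq_zero_of_trace_tmul _ h1
  obtain ⟨u, hu⟩ := hSU
  have : (↑u⁻¹ : Matrix (Fin q) (Fin q) ℝ) * (S * Ω) = Ω := by
    rw [← mul_assoc, ← hu, Units.inv_mul, Matrix.one_mul]
  rw [← this, hSΩ, Matrix.mul_zero]

private lemma lyap_exists {q : ℕ} {A : Matrix (Fin q) (Fin q) ℝ}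
    (hA : A.PosSemidef) (hU : IsUnit A) (C : Matrix (Fin q) (Fin q) ℝ) :
    ∃ Ω, Ω * A + A * Ω = C := by
  let L : Matrix (Fin q) (Fin q) ℝ →ₗ[ℝ] Matrix (Fin q) (Fin q) ℝ :=
    { toFun := fun Ω => Ω * A + A * Ω
      map_add' := fun a b => by
        simp only [Matrix.add_mul, Matrix.mul_add]; abel
      map_smul' := fun c a => by
        simp only [RingHom.id_apply, smul_add, smul_mul_assoc, mul_smul_comm] }
  have hinj : Function.Injective L := by
    intro a b hab
    have : (a - b) * A + A * (a - b) = 0 := by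
      simp only [Matrix.sub_mul, Matrix.mul_sub]
      have : a * A + A * a = b * A + A * b := hab
      rw [sub_add_sub_comm, this, sub_self]
    have := lyap_inj hA hU this
    exact sub_eq_zero.mp this
  have hsurj : Function.Surjective L := (LinearMap.injective_iff_surjective).mp hinj
  obtain ⟨Ω, hΩ⟩ := hsurj C
  exact ⟨Ω, hΩ⟩

private lemma lyap_skew {q : ℕ} {A : Matrix (Fin q) (Fin q) ℝ}
    (hA : A.PosSemidef) (hAsym : Aᵀ = A) (hU : IsUnit A)
    {C : Matrix (Fin q) (Fin q) ℝ} (hC : Cᵀ = -C) :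
    ∃ Ω, Ωᵀ = -Ω ∧ Ω * A + A * Ω = C := by
  obtain ⟨Ω, hΩ⟩ := lyap_exists hA hU C
  refine ⟨Ω, ?_, hΩ⟩
  have ht : (-Ωᵀ) * A + A * (-Ωᵀ) = C := by
    have := congrArg Matrix.transpose hΩ
    simp only [Matrix.transpose_add, Matrix.transpose_mul, hAsym, hC] at this
    rw [Matrix.neg_mul, Matrix.mul_neg, ← neg_add, add_comm, this, neg_neg]
  -- uniqueness from injectivity: both Ω and -Ωᵀ solve it
  have hd : (Ω - (-Ωᵀ)) * A + A * (Ω - (-Ωᵀ)) = 0 := by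
    simp only [Matrix.sub_mul, Matrix.mul_sub]
    rw [sub_add_sub_comm, hΩ, ht, sub_self]
  have := lyap_inj hA hU hd
  have := sub_eq_zero.mp this
  have h2 := congrArg Neg.neg this
  simpa using h2.symm

/-- For `X` of full column rank, the linear map `Π_X(ξ) = ξXᵀX + XXᵀξ` maps the
tangent space `T_X = {ξ : ξᵀX + Xᵀξ = 0}` into itself and is a bijection of
`T_X` onto itself. -/
theorem Pi_X_bijective_on_tangent (n p : ℕ) (X : Matrix (Fin n) (Fin p) ℝ)
    (hX : IsUnit (Xᵀ * X)) :
    (∀ ξ ∈ {ξ : Matrix (Fin n) (Fin p) ℝ | ξᵀ * X + Xᵀ * ξ = 0},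
      ξ * (Xᵀ * X) + X * Xᵀ * ξ ∈
        {ξ : Matrix (Fin n) (Fin p) ℝ | ξᵀ * X + Xᵀ * ξ = 0}) ∧
    Set.BijOn (fun ξ : Matrix (Fin n) (Fin p) ℝ => ξ * (Xᵀ * X) + X * Xᵀ * ξ)
      {ξ : Matrix (Fin n) (Fin p) ℝ | ξᵀ * X + Xᵀ * ξ = 0}
      {ξ : Matrix (Fin n) (Fin p) ℝ | ξᵀ * X + Xᵀ * ξ = 0} := by
  set A := Xᵀ * X with hAdef
  have hA : A.PosSemidef := by
    simpa [hAdef] using Matrix.posSemidef_conjTranspose_mul_self X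
  have hAsym : Aᵀ = A := by
    rw [hAdef, Matrix.transpose_mul, Matrix.transpose_transpose]
  have hdet : IsUnit A.det := (Matrix.isUnit_iff_isUnit_det A).mp hX
  have hinv : A * A⁻¹ = 1 := Matrix.mul_nonsing_inv A hdet
  have hinv' : A⁻¹ * A = 1 := Matrix.nonsing_inv_mul A hdet
  have hmaps : ∀ ξ ∈ {ξ : Matrix (Fin n) (Fin p) ℝ | ξᵀ * X + Xᵀ * ξ = 0},
      ξ * A + X * Xᵀ * ξ ∈ {ξ : Matrix (Fin n) (Fin p) ℝ | ξᵀ * X + Xᵀ * ξ = 0} := by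
    intro ξ hξ
    simp only [Set.mem_setOf_eq] at hξ ⊢
    have key : (ξ * A + X * Xᵀ * ξ)ᵀ * X + Xᵀ * (ξ * A + X * Xᵀ * ξ)
        = (ξᵀ * X + Xᵀ * ξ) * (Xᵀ * X) + (Xᵀ * X) * (ξᵀ * X + Xᵀ * ξ) := by
      simp only [hAdef, Matrix.transpose_add, Matrix.transpose_mul,
        Matrix.transpose_transpose, Matrix.add_mul, Matrix.mul_add, Matrix.mul_assoc]
      abel
    rw [key, hξ]
    simp
  refine ⟨hmaps, hmaps, ?_, ?_⟩
  · -- injectivity on T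
    intro ξ₁ h₁ ξ₂ h₂ heq
    simp only [Set.mem_setOf_eq] at h₁ h₂
    simp only at heq
    set δ := ξ₁ - ξ₂ with hδ
    have hδ0 : δ * A + X * Xᵀ * δ = 0 := by
      simp only [hδ, Matrix.sub_mul, Matrix.mul_sub]
      rw [sub_add_sub_comm, heq, sub_self]
    have hlyap : (Xᵀ * δ) * A + A * (Xᵀ * δ) = 0 := by
      have h3 := congrArg (fun M => Xᵀ * M) hδ0
      simp only [Matrix.mul_add, Matrix.mul_zero] at h3
      calc (Xᵀ * δ) * A + A * (Xᵀ * δ)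
          = Xᵀ * (δ * A) + Xᵀ * (X * Xᵀ * δ) := by
            simp only [hAdef, Matrix.mul_assoc]
        _ = 0 := h3
    have hB0 : Xᵀ * δ = 0 := lyap_inj hA hX hlyap
    have hδA : δ * A = 0 := by
      have h4 : X * Xᵀ * δ = 0 := by rw [Matrix.mul_assoc, hB0, Matrix.mul_zero]
      rw [h4, add_zero] at hδ0; exact hδ0
    have hδz : δ = 0 := by
      have h5 := congrArg (fun M => M * A⁻¹) hδA
      simpa [Matrix.mul_assoc, hinv] using h5
    exact sub_eq_zero.mp hδz
  · -- surjectivity onto T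
    intro ζ hζ
    simp only [Set.mem_setOf_eq] at hζ
    have hCskew : (Xᵀ * ζ)ᵀ = -(Xᵀ * ζ) := by
      rw [Matrix.transpose_mul, Matrix.transpose_transpose]
      linear_combination (norm := module) hζ
    obtain ⟨Ω, hΩskew, hΩ⟩ := lyap_skew hA hAsym hX hCskew
    have hXξ : Xᵀ * ((ζ - X * Ω) * A⁻¹) = Ω := by
      rw [← Matrix.mul_assoc, Matrix.mul_sub, ← Matrix.mul_assoc, ← hAdef, ← hΩ,
        add_sub_cancel_right, Matrix.mul_assoc, hinv, Matrix.mul_one]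
    have h1 : (ζ - X * Ω) * A⁻¹ * A = ζ - X * Ω := by
      rw [Matrix.mul_assoc, hinv', Matrix.mul_one]
    refine ⟨(ζ - X * Ω) * A⁻¹, ?_, ?_⟩
    · simp only [Set.mem_setOf_eq]
      have hξT : ((ζ - X * Ω) * A⁻¹)ᵀ * X = Ωᵀ := by
        have h6 := congrArg Matrix.transpose hXξ
        simpa [Matrix.transpose_mul] using h6
      rw [hξT, hXξ, hΩskew, neg_add_cancel]
    · simp only
      rw [show X * Xᵀ * ((ζ - X * Ω) * A⁻¹) = X * (Xᵀ * ((ζ - X * Ω) * A⁻¹)) from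
        Matrix.mul_assoc _ _ _, hXξ, h1]
      abel
end
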